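/- arXiv:math/0605210 — 2 statements merged into one kernel-verified Lean document; each statement's English description precedes it below -/
import Mathlib

section
/- Let d ≥ 1, k ∈ ℕ, j ∈ ℕ, and e ∈ 𝕊^{d-1}. For any (ξ', τ) ∈ P_e × ℝ (where P_e = {ξ : ξ·e = 0}), the Lebesgue measure of the set {ξ₁ ∈ ℝ : ξ₁ ∈ [2^{k-2}, 2^{k+2}] and |τ + ξ₁² + |ξ'|²| ≤ 2^{j+1}} is at most C·min(2^{j-k}, 2^k) for an absolute constant C. -/
open MeasureTheory Set
open scoped RealInnerProductSpace

/-- For any `(ξ', τ)` in the hyperplane `P_e × ℝ`, the measure of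
`{ξ₁ : ξ₁ ∈ [2^{k-2}, 2^{k+2}], |τ + ξ₁² + |ξ'|²| ≤ 2^{j+1}}` is at most
`C·min(2^{j-k}, 2^k)` for an absolute constant `C`. -/
theorem measure_paraboloid_slice :
    ∃ C : ℝ, 0 < C ∧
      ∀ (d : ℕ), 1 ≤ d → ∀ (k j : ℕ) (e ξ' : EuclideanSpace ℝ (Fin d)),
        ‖e‖ = 1 → ⟪ξ', e⟫ = 0 → ∀ τ : ℝ,
          volume {ξ₁ : ℝ |
              ξ₁ ∈ Set.Icc ((2 : ℝ) ^ ((k : ℝ) - 2)) ((2 : ℝ) ^ ((k : ℝ) + 2)) ∧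
              |τ + ξ₁ ^ 2 + ‖ξ'‖ ^ 2| ≤ 2 ^ ((j : ℝ) + 1)} ≤
            ENNReal.ofReal (C * min ((2 : ℝ) ^ ((j : ℝ) - (k : ℝ))) ((2 : ℝ) ^ (k : ℝ))) := by
  refine ⟨16, by norm_num, ?_⟩
  intro d hd k j e ξ' he hperp τ
  set a : ℝ := (2 : ℝ) ^ ((k : ℝ) - 2) with ha_def
  set b : ℝ := (2 : ℝ) ^ ((k : ℝ) + 2) with hb_def
  set M : ℝ := (2 : ℝ) ^ ((j : ℝ) + 1) with hM_def
  set S : Set ℝ := {ξ₁ : ℝ |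
      ξ₁ ∈ Set.Icc a b ∧ |τ + ξ₁ ^ 2 + ‖ξ'‖ ^ 2| ≤ M} with hS_def
  have h2 : (0 : ℝ) < 2 := by norm_num
  have ha_pos : 0 < a := Real.rpow_pos_of_pos h2 _
  have hM_pos : 0 < M := Real.rpow_pos_of_pos h2 _
  have hbound1 : volume S ≤ ENNReal.ofReal (4 * (2 : ℝ) ^ (k : ℝ)) := by
    have hsub : S ⊆ Set.Icc a b := fun x hx => hx.1
    calc volume S ≤ volume (Set.Icc a b) := measure_mono hsub
      _ = ENNReal.ofReal (b - a) := by rw [Real.volume_Icc]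
      _ ≤ ENNReal.ofReal (4 * (2 : ℝ) ^ (k : ℝ)) := by
          apply ENNReal.ofReal_le_ofReal
          have hb : b = 4 * (2 : ℝ) ^ (k : ℝ) := by
            rw [hb_def, Real.rpow_add h2]; norm_num; ring
          linarith [ha_pos]
  have hbound2 : volume S ≤ ENNReal.ofReal (16 * (2 : ℝ) ^ ((j : ℝ) - (k : ℝ))) := by
    rcases Set.eq_empty_or_nonempty S with hS | ⟨x₀, hx₀⟩
    · simp [hS]
    · have hMa : M / a = 8 * (2 : ℝ) ^ ((j : ℝ) - (k : ℝ)) := by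
        rw [hM_def, ha_def, ← Real.rpow_sub h2]
        have : (j : ℝ) + 1 - ((k : ℝ) - 2) = ((j : ℝ) - (k : ℝ)) + 3 := by ring
        rw [this, Real.rpow_add h2]
        norm_num; ring
      have hdiam : ∀ y ∈ S, |y - x₀| ≤ M / a := by
        intro y hy
        obtain ⟨⟨hy1, _⟩, hy2⟩ := hy
        obtain ⟨⟨hx1, _⟩, hx2⟩ := hx₀
        have hsum : 2 * a ≤ y + x₀ := by linarith
        have hsq : |y ^ 2 - x₀ ^ 2| ≤ 2 * M := by
          have : y ^ 2 - x₀ ^ 2 = (τ + y ^ 2 + ‖ξ'‖ ^ 2) - (τ + x₀ ^ 2 + ‖ξ'‖ ^ 2) := by ring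
          rw [this]
          calc |(τ + y ^ 2 + ‖ξ'‖ ^ 2) - (τ + x₀ ^ 2 + ‖ξ'‖ ^ 2)|
              ≤ |τ + y ^ 2 + ‖ξ'‖ ^ 2| + |τ + x₀ ^ 2 + ‖ξ'‖ ^ 2| := abs_sub _ _
            _ ≤ 2 * M := by linarith
        have key : |y - x₀| * (y + x₀) ≤ 2 * M := by
          have h1 : |y - x₀| * (y + x₀) = |y ^ 2 - x₀ ^ 2| := by
            rw [← abs_of_pos (show (0:ℝ) < y + x₀ by linarith), ← abs_mul]
            ring_nf
          rw [h1]; exact hsq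
        have h2a : |y - x₀| * (2 * a) ≤ 2 * M := by
          calc |y - x₀| * (2 * a) ≤ |y - x₀| * (y + x₀) := by
                exact mul_le_mul_of_nonneg_left hsum (abs_nonneg _)
            _ ≤ 2 * M := key
        rw [le_div_iff₀ ha_pos]
        nlinarith
      have hsub : S ⊆ Set.Icc (x₀ - M / a) (x₀ + M / a) := by
        intro y hy
        have := hdiam y hy
        rw [abs_le] at this
        constructor <;> linarith [this.1, this.2]
      calc volume S ≤ volume (Set.Icc (x₀ - M / a) (x₀ + M / a)) := measure_mono hsub
        _ = ENNReal.ofReal (x₀ + M / a - (x₀ - M / a)) := by rw [Real.volume_Icc]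
        _ ≤ ENNReal.ofReal (16 * (2 : ℝ) ^ ((j : ℝ) - (k : ℝ))) := by
            apply ENNReal.ofReal_le_ofReal
            rw [show x₀ + M / a - (x₀ - M / a) = 2 * (M / a) by ring, hMa]
            linarith [Real.rpow_pos_of_pos h2 ((j : ℝ) - (k : ℝ))]
  have hmin : volume S ≤ ENNReal.ofReal
      (min (16 * (2 : ℝ) ^ ((j : ℝ) - (k : ℝ))) (4 * (2 : ℝ) ^ (k : ℝ))) := by
    rcases le_total (16 * (2 : ℝ) ^ ((j : ℝ) - (k : ℝ))) (4 * (2 : ℝ) ^ (k : ℝ)) with h | h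
    · rwa [min_eq_left h]
    · rwa [min_eq_right h]
  refine hmin.trans (ENNReal.ofReal_le_ofReal ?_)
  have hu : 0 < (2 : ℝ) ^ ((j : ℝ) - (k : ℝ)) := Real.rpow_pos_of_pos h2 _
  have hv : 0 < (2 : ℝ) ^ (k : ℝ) := Real.rpow_pos_of_pos h2 _
  rcases le_total ((2 : ℝ) ^ ((j : ℝ) - (k : ℝ))) ((2 : ℝ) ^ (k : ℝ)) with h | h
  · rw [min_eq_left h]
    calc min (16 * (2:ℝ) ^ ((j:ℝ) - (k:ℝ))) (4 * (2:ℝ) ^ (k:ℝ))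
        ≤ 16 * (2:ℝ) ^ ((j:ℝ) - (k:ℝ)) := min_le_left _ _
      _ = 16 * (2:ℝ) ^ ((j:ℝ) - (k:ℝ)) := rfl
  · rw [min_eq_right h]
    calc min (16 * (2:ℝ) ^ ((j:ℝ) - (k:ℝ))) (4 * (2:ℝ) ^ (k:ℝ))
        ≤ 4 * (2:ℝ) ^ (k:ℝ) := min_le_right _ _
      _ ≤ 16 * (2:ℝ) ^ (k:ℝ) := by linarith
end

section
/- Let D_{k,j} = {(ξ,τ) ∈ ℝ^d × ℝ : |ξ| ∈ [2^{k-1}, 2^{k+1}], |τ+|ξ|²| ≤ 2^{j+1}} for k ≥ 1. If g_j ∈ L²(ℝ^d×ℝ) is supported in D_{k,j}, e ∈ 𝕊^{d-1}, and χ : ℝ → [0,1] is supported in [c·2^k, ∞) with c = 2^{-40}, then for every x₁ ∈ ℝ: ‖∫_ℝ g_j(ξ₁e + ξ', τ) χ(ξ₁) e^{i x₁ ξ₁} dξ₁‖_{L²_{ξ',τ}} ≤ C 2^{-k/2} 2^{j/2} ‖g_j‖_{L²}, where ξ' ranges over the hyperplane P_e = {ξ·e = 0}. -/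
open MeasureTheory Complex Set
open scoped RealInnerProductSpace

lemma ls_aux_geom {a b δ m w τ : ℝ} (hδ : 0 < δ) (ha : δ ≤ a) (hb : δ ≤ b)
    (h1 : |τ + (a ^ 2 + w)| ≤ m) (h2 : |τ + (b ^ 2 + w)| ≤ m) : |a - b| ≤ m / δ := by
  rw [abs_le] at h1 h2
  rcases le_total b a with hba | hab
  · rw [_root_.abs_of_nonneg (by linarith : (0:ℝ) ≤ a - b), le_div_iff₀ hδ]
    nlinarith [mul_nonneg (sub_nonneg.2 hba) (show (0:ℝ) ≤ a + b - 2 * δ by linarith)]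
  · rw [abs_of_nonpos (by linarith : a - b ≤ 0), le_div_iff₀ hδ]
    nlinarith [mul_nonneg (sub_nonneg.2 hab) (show (0:ℝ) ≤ a + b - 2 * δ by linarith)]

lemma ls_aux_CS {f h : ℝ → ℂ} {s₀ L : ℝ} (hL : 0 ≤ L)
    (hsupp : ∀ ξ, f ξ ≠ 0 → ξ ∈ Set.Icc (s₀ - L) (s₀ + L))
    (hfh : ∀ ξ, ‖f ξ‖ ≤ ‖h ξ‖)
    (hh2 : Integrable (fun ξ => ‖h ξ‖ ^ 2)) :
    ‖∫ ξ, f ξ‖ ^ 2 ≤ 2 * L * ∫ ξ, ‖h ξ‖ ^ 2 := by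
  have hI2 : 0 ≤ ∫ ξ, ‖h ξ‖ ^ 2 := integral_nonneg fun ξ => sq_nonneg _
  by_cases hfi : Integrable f
  swap
  · rw [integral_undef hfi]
    simpa using mul_nonneg (by linarith : (0:ℝ) ≤ 2 * L) hI2
  set T : Set ℝ := Set.Icc (s₀ - L) (s₀ + L) with hT
  set χT : ℝ → ℝ := T.indicator (fun _ => (1:ℝ)) with hχT
  have hfsm : AEStronglyMeasurable f volume := hfi.1
  have hf2 : Integrable (fun ξ => ‖f ξ‖ ^ 2) := by
    refine Integrable.mono hh2 ?_ (ae_of_all _ fun ξ => ?_)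
    · simpa [pow_two, Pi.mul_def] using (hfsm.norm.mul hfsm.norm)
    · simp only [Real.norm_eq_abs, _root_.abs_pow, abs_norm]
      exact pow_le_pow_left₀ (norm_nonneg _) (hfh ξ) 2
  have hmemf : MemLp (fun ξ => ‖f ξ‖) (ENNReal.ofReal 2) (volume : Measure ℝ) := by
    rw [ENNReal.ofReal_ofNat]
    exact (memLp_two_iff_integrable_sq hfsm.norm).2 hf2
  have hmemχ : MemLp χT (ENNReal.ofReal 2) (volume : Measure ℝ) := by
    rw [ENNReal.ofReal_ofNat]
    exact memLp_indicator_const 2 measurableSet_Icc 1 (Or.inr measure_Icc_lt_top.ne)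
  have hpq : Real.HolderConjugate 2 2 := by constructor <;> norm_num
  have hnn : 0 ≤ᵐ[(volume : Measure ℝ)] χT :=
    ae_of_all _ fun ξ => Set.indicator_nonneg (fun _ _ => zero_le_one) _
  have hCS := integral_mul_le_Lp_mul_Lq_of_nonneg hpq hnn
    (ae_of_all _ fun ξ => norm_nonneg (f ξ)) hmemχ hmemf
  have hrpow2 : ∀ x : ℝ, x ^ (2:ℝ) = x ^ (2:ℕ) := fun x => by
    rw [show (2:ℝ) = ((2:ℕ):ℝ) by norm_num, Real.rpow_natCast]
  simp_rw [hrpow2] at hCS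
  have heq1 : (fun ξ => χT ξ * ‖f ξ‖) = fun ξ => ‖f ξ‖ := by
    funext ξ
    by_cases hξ : ξ ∈ T
    · simp [hχT, hξ]
    · have : f ξ = 0 := by
        by_contra hne
        exact hξ (hsupp ξ hne)
      simp [hχT, hξ, this]
  have heq2 : (∫ ξ, χT ξ ^ (2:ℕ)) = 2 * L := by
    have : (fun ξ => χT ξ ^ (2:ℕ)) = χT := by
      funext ξ
      by_cases hξ : ξ ∈ T <;> simp [hχT, hξ]
    rw [this, hχT, integral_indicator_const _ measurableSet_Icc]
    simp only [smul_eq_mul, mul_one]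
    rw [measureReal_def, Real.volume_Icc, ENNReal.toReal_ofReal (by linarith)]
    ring
  rw [heq1, heq2] at hCS
  have hmono : (∫ ξ, ‖f ξ‖ ^ 2) ≤ ∫ ξ, ‖h ξ‖ ^ 2 :=
    integral_mono hf2 hh2 fun ξ => pow_le_pow_left₀ (norm_nonneg _) (hfh ξ) 2
  have hI2f : 0 ≤ ∫ ξ, ‖f ξ‖ ^ 2 := integral_nonneg fun ξ => sq_nonneg _
  have hbound : ‖∫ ξ, f ξ‖ ≤ (2 * L) ^ (1/2:ℝ) * (∫ ξ, ‖h ξ‖ ^ 2) ^ (1/2:ℝ) := by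
    calc ‖∫ ξ, f ξ‖ ≤ ∫ ξ, ‖f ξ‖ := norm_integral_le_integral_norm f
      _ ≤ (2 * L) ^ (1/2:ℝ) * (∫ ξ, ‖f ξ‖ ^ 2) ^ (1/2:ℝ) := hCS
      _ ≤ (2 * L) ^ (1/2:ℝ) * (∫ ξ, ‖h ξ‖ ^ 2) ^ (1/2:ℝ) := by
          have := Real.rpow_le_rpow hI2f hmono (by norm_num : (0:ℝ) ≤ 1/2)
          have h2L : (0:ℝ) ≤ (2 * L) ^ (1/2:ℝ) := Real.rpow_nonneg (by linarith) _
          exact mul_le_mul_of_nonneg_left this h2L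
  calc ‖∫ ξ, f ξ‖ ^ 2 ≤ ((2 * L) ^ (1/2:ℝ) * (∫ ξ, ‖h ξ‖ ^ 2) ^ (1/2:ℝ)) ^ 2 :=
        pow_le_pow_left₀ (norm_nonneg _) hbound 2
    _ = 2 * L * ∫ ξ, ‖h ξ‖ ^ 2 := by
        rw [mul_pow, ← Real.rpow_natCast ((2*L) ^ (1/2:ℝ)) 2,
          ← Real.rpow_natCast ((∫ ξ, ‖h ξ‖ ^ 2) ^ (1/2:ℝ)) 2,
          ← Real.rpow_mul (by linarith : (0:ℝ) ≤ 2*L), ← Real.rpow_mul hI2]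
        norm_num

/-- Local smoothing: if `g_j` is supported in
`D_{k,j} = {|ξ| ∈ [2^{k-1},2^{k+1}], |τ+|ξ|²| ≤ 2^{j+1}}` and `χ : ℝ → [0,1]` is supported in
`[2^{-40}·2^k, ∞)`, then for every `x₁`,
`‖∫ g_j(ξ₁e+ξ',τ) χ(ξ₁) e^{ix₁ξ₁} dξ₁‖_{L²_{ξ',τ}} ≤ C 2^{-k/2} 2^{j/2} ‖g_j‖_{L²}`.
Here we write `ℝ^d = ℝ e ⊕ P_e` in coordinates, `ξ = ξ₁ e + ξ'` with `ξ' ∈ P_e ≅ ℝ^{n}`,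
`n = d - 1`. -/
theorem local_smoothing_estimate :
    ∃ C : ℝ, 0 < C ∧
      ∀ (n k j : ℕ), 1 ≤ k →
        ∀ (g : ℝ → EuclideanSpace ℝ (Fin n) → ℝ → ℂ) (χ : ℝ → ℝ),
          MemLp (fun p : ℝ × EuclideanSpace ℝ (Fin n) × ℝ => g p.1 p.2.1 p.2.2) 2 volume →
          (∀ ξ₁ ξ' τ, g ξ₁ ξ' τ ≠ 0 →
            ξ₁ ^ 2 + ‖ξ'‖ ^ 2 ∈
                Set.Icc (((2 : ℝ) ^ ((k : ℝ) - 1)) ^ 2) (((2 : ℝ) ^ ((k : ℝ) + 1)) ^ 2) ∧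
              |τ + (ξ₁ ^ 2 + ‖ξ'‖ ^ 2)| ≤ 2 ^ ((j : ℝ) + 1)) →
          (∀ r, χ r ∈ Set.Icc (0 : ℝ) 1) →
          (∀ r, χ r ≠ 0 → 2 ^ (-40 : ℝ) * 2 ^ (k : ℝ) ≤ r) →
          ∀ x₁ : ℝ,
            (∫ p : EuclideanSpace ℝ (Fin n) × ℝ,
                ‖∫ ξ₁ : ℝ, g ξ₁ p.1 p.2 * (χ ξ₁ : ℂ) *
                    Complex.exp (Complex.I * x₁ * ξ₁)‖ ^ 2) ^ (1 / 2 : ℝ) ≤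
              C * 2 ^ (-(k : ℝ) / 2) * 2 ^ ((j : ℝ) / 2) *
                (∫ p : ℝ × EuclideanSpace ℝ (Fin n) × ℝ,
                    ‖g p.1 p.2.1 p.2.2‖ ^ 2) ^ (1 / 2 : ℝ) := by
  refine ⟨(2:ℝ) ^ (21:ℝ), by positivity, ?_⟩
  intro n k j hk g χ hg hDsupp hχ01 hχsupp x₁
  set δ : ℝ := (2:ℝ) ^ ((k:ℝ) - 40) with hδdef
  have hδpos : 0 < δ := Real.rpow_pos_of_pos two_pos _
  set m : ℝ := (2:ℝ) ^ ((j:ℝ) + 1) with hmdef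
  have hmpos : 0 < m := Real.rpow_pos_of_pos two_pos _
  set L : ℝ := m / δ with hLdef
  have hLpos : 0 < L := div_pos hmpos hδpos
  have hvol : (volume : Measure (ℝ × EuclideanSpace ℝ (Fin n) × ℝ)) =
      (volume : Measure ℝ).prod (volume : Measure (EuclideanSpace ℝ (Fin n) × ℝ)) := Measure.volume_eq_prod _ _
  have hrpow2 : ∀ x : ℝ, x ^ (2:ℝ) = x ^ (2:ℕ) := fun x => by
    rw [show (2:ℝ) = ((2:ℕ):ℝ) by norm_num, Real.rpow_natCast]
  have hG2 : Integrable (fun p : ℝ × EuclideanSpace ℝ (Fin n) × ℝ => ‖g p.1 p.2.1 p.2.2‖ ^ 2)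
      ((volume : Measure ℝ).prod (volume : Measure (EuclideanSpace ℝ (Fin n) × ℝ))) := by
    have h1 := hg.integrable_norm_rpow (by norm_num) (by norm_num)
    rw [show ((2:ENNReal).toReal) = (2:ℝ) by norm_num] at h1
    simp_rw [hrpow2] at h1
    rwa [hvol] at h1
  have hae : ∀ᵐ p ∂(volume : Measure (EuclideanSpace ℝ (Fin n) × ℝ)),
      Integrable (fun ξ₁ : ℝ => ‖g ξ₁ p.1 p.2‖ ^ 2) volume := hG2.prod_left_ae
  have hkey : ∀ᵐ p ∂(volume : Measure (EuclideanSpace ℝ (Fin n) × ℝ)),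
      ‖∫ ξ₁ : ℝ, g ξ₁ p.1 p.2 * (χ ξ₁ : ℂ) * Complex.exp (Complex.I * x₁ * ξ₁)‖ ^ 2 ≤
        2 * L * ∫ ξ₁ : ℝ, ‖g ξ₁ p.1 p.2‖ ^ 2 := by
    filter_upwards [hae] with p hint
    set f := fun ξ₁ : ℝ => g ξ₁ p.1 p.2 * (χ ξ₁ : ℂ) * Complex.exp (Complex.I * x₁ * ξ₁) with hf
    have hfh : ∀ ξ : ℝ, ‖f ξ‖ ≤ ‖g ξ p.1 p.2‖ := by
      intro ξ
      have hexp : ‖Complex.exp (Complex.I * x₁ * ξ)‖ = 1 := by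
        rw [Complex.norm_exp]
        norm_num [Complex.mul_re]
      have hχξ : ‖((χ ξ : ℝ) : ℂ)‖ ≤ 1 := by
        rw [Complex.norm_real, Real.norm_eq_abs,
          _root_.abs_of_nonneg (hχ01 ξ).1]
        exact (hχ01 ξ).2
      calc ‖f ξ‖ = ‖g ξ p.1 p.2‖ * ‖((χ ξ : ℝ) : ℂ)‖ * 1 := by
            rw [hf]; rw [norm_mul, norm_mul, hexp]
        _ ≤ ‖g ξ p.1 p.2‖ * 1 * 1 := by
            gcongr
        _ = ‖g ξ p.1 p.2‖ := by ring
    have hsupport : ∀ ξ : ℝ, f ξ ≠ 0 → δ ≤ ξ ∧ |p.2 + (ξ ^ 2 + ‖p.1‖ ^ 2)| ≤ m := by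
      intro ξ hne
      rw [hf] at hne
      have hg0 : g ξ p.1 p.2 ≠ 0 := fun h0 => hne (by simp [h0])
      have hχ0 : χ ξ ≠ 0 := fun h0 => hne (by simp [h0])
      refine ⟨?_, (hDsupp ξ p.1 p.2 hg0).2⟩
      have h := hχsupp ξ hχ0
      rwa [show (2:ℝ) ^ (-40:ℝ) * 2 ^ (k:ℝ) = δ by
        rw [hδdef, ← Real.rpow_add two_pos]; congr 1; ring] at h
    rcases em (∃ ξ : ℝ, f ξ ≠ 0) with ⟨s₀, hs₀⟩ | hno
    · refine ls_aux_CS (s₀ := s₀) hLpos.le ?_ hfh hint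
      intro ξ hξ
      obtain ⟨hδξ, hmξ⟩ := hsupport ξ hξ
      obtain ⟨hδs, hms⟩ := hsupport s₀ hs₀
      have habs := ls_aux_geom hδpos hδξ hδs hmξ hms
      rw [abs_le] at habs
      rw [Set.mem_Icc]
      constructor <;> [linarith [habs.1]; linarith [habs.2]]
    · refine ls_aux_CS (s₀ := 0) hLpos.le ?_ hfh hint
      intro ξ hξ
      exact absurd ⟨ξ, hξ⟩ hno
  have hmajor : Integrable (fun p : EuclideanSpace ℝ (Fin n) × ℝ => 2 * L * ∫ ξ₁ : ℝ, ‖g ξ₁ p.1 p.2‖ ^ 2) volume :=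
    (hG2.integral_prod_right).const_mul _
  have hle : (∫ p : EuclideanSpace ℝ (Fin n) × ℝ, ‖∫ ξ₁ : ℝ, g ξ₁ p.1 p.2 * (χ ξ₁ : ℂ) *
        Complex.exp (Complex.I * x₁ * ξ₁)‖ ^ 2) ≤
      2 * L * ∫ q : ℝ × EuclideanSpace ℝ (Fin n) × ℝ, ‖g q.1 q.2.1 q.2.2‖ ^ 2 := by
    calc (∫ p : EuclideanSpace ℝ (Fin n) × ℝ, ‖∫ ξ₁ : ℝ, g ξ₁ p.1 p.2 * (χ ξ₁ : ℂ) *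
          Complex.exp (Complex.I * x₁ * ξ₁)‖ ^ 2)
        ≤ ∫ p : EuclideanSpace ℝ (Fin n) × ℝ, 2 * L * ∫ ξ₁ : ℝ, ‖g ξ₁ p.1 p.2‖ ^ 2 :=
          integral_mono_of_nonneg (ae_of_all _ fun p => sq_nonneg _) hmajor hkey
      _ = 2 * L * ∫ p : EuclideanSpace ℝ (Fin n) × ℝ, ∫ ξ₁ : ℝ, ‖g ξ₁ p.1 p.2‖ ^ 2 := integral_const_mul _ _
      _ = 2 * L * ∫ q : ℝ × EuclideanSpace ℝ (Fin n) × ℝ, ‖g q.1 q.2.1 q.2.2‖ ^ 2 := by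
          congr 1
          rw [hvol]
          rw [← integral_integral_swap (f := fun (ξ₁ : ℝ) (p : EuclideanSpace ℝ (Fin n) × ℝ) => ‖g ξ₁ p.1 p.2‖ ^ 2) hG2]
          exact integral_integral hG2
  have hLHSnn : 0 ≤ ∫ p : EuclideanSpace ℝ (Fin n) × ℝ, ‖∫ ξ₁ : ℝ, g ξ₁ p.1 p.2 * (χ ξ₁ : ℂ) *
      Complex.exp (Complex.I * x₁ * ξ₁)‖ ^ 2 := integral_nonneg fun p => sq_nonneg _
  have hRHSnn : 0 ≤ ∫ q : ℝ × EuclideanSpace ℝ (Fin n) × ℝ, ‖g q.1 q.2.1 q.2.2‖ ^ 2 :=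
    integral_nonneg fun q => sq_nonneg _
  have hfin := Real.rpow_le_rpow hLHSnn hle (by norm_num : (0:ℝ) ≤ 1/2)
  refine le_trans hfin ?_
  rw [Real.mul_rpow (by positivity) hRHSnn]
  have h2L : 2 * L = (2:ℝ) ^ ((j:ℝ) + 42 - (k:ℝ)) := by
    rw [hLdef, hmdef, hδdef]
    symm
    rw [show ((j:ℝ) + 42 - (k:ℝ)) = 1 + (((j:ℝ) + 1) - ((k:ℝ) - 40)) by ring,
      Real.rpow_add two_pos, Real.rpow_sub two_pos, Real.rpow_one]
  have hconst : (2 * L) ^ (1/2:ℝ) =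
      (2:ℝ) ^ (21:ℝ) * 2 ^ (-(k:ℝ)/2) * 2 ^ ((j:ℝ)/2) := by
    rw [h2L, ← Real.rpow_mul (by norm_num : (0:ℝ) ≤ 2),
      ← Real.rpow_add two_pos, ← Real.rpow_add two_pos]
    congr 1; ring
  rw [hconst]
end
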